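/- There exists a constant γ > 0, depending only on the matrix D, such that for all right-hand sides r, r' ∈ ℝ^m for which the polyhedra P(r) and P(r') are both nonempty, and for every u ∈ P(r), the distance from u to P(r') satisfies dist(u, P(r')) ≤ γ‖r − r'‖. -/

import Mathlib

open Finset Metric


open Finset

lemma cone_caratheodory {ι : Type*} [DecidableEq ι] {E : Type*} [AddCommGroup E] [Module ℝ E]
    (a : ι → E) (s : Finset ι) :
    ∀ lam : ι → ℝ, (∀ j ∈ s, 0 ≤ lam j) →
    ∃ t ⊆ s, LinearIndependent ℝ (fun j : t => a j) ∧
      ∃ mu : ι → ℝ, (∀ j ∈ t, 0 ≤ mu j) ∧ ∑ j ∈ t, mu j • a j = ∑ j ∈ s, lam j • a j := by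
  induction s using Finset.strongInduction with
  | _ s IH =>
    intro lam h0
    by_cases hli : LinearIndependent ℝ (fun j : s => a j)
    · exact ⟨s, le_refl s, hli, lam, h0, rfl⟩
    · obtain ⟨g, hg0, jne, hjne⟩ := Fintype.not_linearIndependent_iff.1 hli
      -- build c : ι → ℝ from g, possibly negated so that it is positive somewhere on s
      have key : ∃ c : ι → ℝ, (∑ j ∈ s, c j • a j = 0) ∧ ∃ j0 ∈ s, 0 < c j0 := by
        set c : ι → ℝ := fun j => if h : j ∈ s then g ⟨j, h⟩ else 0 with hc
        have hsum : ∑ j ∈ s, c j • a j = 0 := by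
          rw [← Finset.sum_attach s (fun j => c j • a j)]
          rw [← hg0]
          refine Finset.sum_congr rfl fun j _ => ?_
          simp [hc, j.2]
        by_cases hpos : ∃ j0 ∈ s, 0 < c j0
        · exact ⟨c, hsum, hpos⟩
        · refine ⟨-c, by simpa using congrArg Neg.neg hsum, jne, jne.2, ?_⟩
          push_neg at hpos
          have h1 : c jne ≠ 0 := by simpa [hc, jne.2] using hjne
          have h2 := hpos jne jne.2
          simp only [Pi.neg_apply]
          cases (lt_or_eq_of_le h2) with
          | inl h => linarith
          | inr h => exact absurd h h1
      obtain ⟨c, hcsum, j0, hj0s, hj0⟩ := key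
      -- pick minimizer of lam j / c j over positive c j
      have hPne : (s.filter fun j => 0 < c j).Nonempty := ⟨j0, Finset.mem_filter.2 ⟨hj0s, hj0⟩⟩
      obtain ⟨j1, hj1P, hj1min⟩ := Finset.exists_min_image _ (fun j => lam j / c j) hPne
      obtain ⟨hj1s, hj1c⟩ := Finset.mem_filter.1 hj1P
      set τ : ℝ := lam j1 / c j1 with hτ
      have hτ0 : 0 ≤ τ := div_nonneg (h0 j1 hj1s) hj1c.le
      set lam' : ι → ℝ := fun j => lam j - τ * c j with hlam'
      have hlam'0 : ∀ j ∈ s, 0 ≤ lam' j := by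
        intro j hj
        simp only [hlam']
        rcases le_or_gt (c j) 0 with h | h
        · nlinarith [h0 j hj]
        · have := hj1min j (Finset.mem_filter.2 ⟨hj, h⟩)
          rw [hτ, div_le_div_iff₀ hj1c h] at this
          have hcj1 : c j1 ≠ 0 := ne_of_gt hj1c
          rw [hτ, div_mul_eq_mul_div, sub_nonneg, div_le_iff₀ hj1c]
          linarith
      have hlam'j1 : lam' j1 = 0 := by
        simp only [hlam', hτ]
        field_simp
        simp
      have hsum' : ∑ j ∈ s.erase j1, lam' j • a j = ∑ j ∈ s, lam j • a j := by
        rw [Finset.sum_erase _ (by rw [hlam'j1, zero_smul])]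
        simp only [hlam', sub_smul, Finset.sum_sub_distrib, mul_smul]
        rw [← Finset.smul_sum, hcsum, smul_zero, sub_zero]
      obtain ⟨t, hts, hli', mu, hmu0, hmusum⟩ :=
        IH (s.erase j1) (Finset.erase_ssubset hj1s) lam' (fun j hj => hlam'0 j (Finset.mem_of_mem_erase hj))
      exact ⟨t, hts.trans (Finset.erase_subset _ _), hli', mu, hmu0, by rw [hmusum, hsum']⟩
variable {ι : Type*} [Fintype ι] [DecidableEq ι]
variable {E : Type*} [NormedAddCommGroup E] [InnerProductSpace ℝ E] [FiniteDimensional ℝ E]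

local notation "⟪" x ", " y "⟫" => @inner ℝ _ _ x y





/-- linear map sending coefficients on `t` to the corresponding combination -/
noncomputable def combMap (a : ι → E) (t : Finset ι) : ((↥t) → ℝ) →ₗ[ℝ] E where
  toFun lam := ∑ j : ↥t, lam j • a (j : ι)
  map_add' x y := by simp [add_smul, Finset.sum_add_distrib]
  map_smul' c x := by simp [mul_smul, Finset.smul_sum]

lemma combMap_inj (a : ι → E) (t : Finset ι)
    (h : LinearIndependent ℝ (fun j : t => a j)) : Function.Injective (combMap a t) := by
  rw [← LinearMap.ker_eq_bot]
  rw [LinearMap.ker_eq_bot']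
  intro g hg
  funext j
  exact Fintype.linearIndependent_iff.1 h g hg j

def coneSet (a : ι → E) (s : Finset ι) : Set E :=
  {x | ∃ lam : ι → ℝ, (∀ j ∈ s, 0 ≤ lam j) ∧ x = ∑ j ∈ s, lam j • a j}

lemma coneSet_isClosed (a : ι → E) (s : Finset ι) : IsClosed (coneSet a s) := by
  have hrw : coneSet a s = ⋃ (t : Finset ι), ⋃ (_ : t ⊆ s ∧ LinearIndependent ℝ (fun j : t => a j)),
      (combMap a t) '' {lam | ∀ j, 0 ≤ lam j} := by
    ext x
    simp only [Set.mem_iUnion, Set.mem_image]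
    constructor
    · rintro ⟨lam, h0, rfl⟩
      obtain ⟨t, hts, hli, mu, hmu0, hmusum⟩ := cone_caratheodory a s lam h0
      refine ⟨t, ⟨hts, hli⟩, fun j => mu j, fun j => hmu0 j j.2, ?_⟩
      rw [← hmusum, combMap]
      simp only [LinearMap.coe_mk, AddHom.coe_mk]
      exact Finset.sum_coe_sort t (fun j => mu j • a j)
    · rintro ⟨t, ⟨hts, _⟩, lam, hlam0, rfl⟩
      refine ⟨fun j => if h : j ∈ t then lam ⟨j, h⟩ else 0, ?_, ?_⟩
      · intro j _
        by_cases h : j ∈ t <;> simp [h] <;> exact hlam0 _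
      · have h1 : ∑ j ∈ s, (fun j => if h : j ∈ t then lam ⟨j, h⟩ else 0) j • a j
            = ∑ j ∈ t, (fun j => if h : j ∈ t then lam ⟨j, h⟩ else 0) j • a j :=
          (Finset.sum_subset hts (by intro j _ hj; simp [hj])).symm
        rw [h1, ← Finset.sum_coe_sort t (fun j => (if h : j ∈ t then lam ⟨j, h⟩ else 0) • a j)]
        rw [combMap]
        simp only [LinearMap.coe_mk, AddHom.coe_mk]
        exact Finset.sum_congr rfl fun j _ => by simp [j.2]
  rw [hrw]
  apply isClosed_iUnion_of_finite
  intro t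
  apply isClosed_iUnion_of_finite
  rintro ⟨hts, hli⟩
  apply ((combMap a t).isClosedEmbedding_of_injective
    (LinearMap.ker_eq_bot.2 (combMap_inj a t hli))).isClosedMap
  have : {lam : (↥t) → ℝ | ∀ j, 0 ≤ lam j} = ⋂ j, {lam : (↥t) → ℝ | 0 ≤ lam j} := by
    ext; simp [Set.mem_iInter]
  rw [this]
  exact isClosed_iInter fun j => isClosed_le continuous_const (continuous_apply j)

lemma mem_coneSet_self (a : ι → E) (s : Finset ι) {j : ι} (hj : j ∈ s) : a j ∈ coneSet a s := by
  refine ⟨fun j' => if j' = j then 1 else 0, fun j' _ => by by_cases hc : j' = j <;> simp [hc], ?_⟩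
  have : ∀ j' ∈ s, (if j' = j then (1:ℝ) else 0) • a j' = if j' = j then a j' else 0 := by
    intro j' _; split <;> simp
  rw [Finset.sum_congr rfl this, Finset.sum_ite_eq' s j (fun j' => a j'), if_pos hj]

lemma zero_mem_coneSet (a : ι → E) (s : Finset ι) : (0:E) ∈ coneSet a s :=
  ⟨fun _ => 0, fun _ _ => le_refl 0, by simp⟩

/-- Farkas' lemma. -/
lemma farkas_cone [CompleteSpace E] (a : ι → E) (s : Finset ι) (h : E)
    (hyp : ∀ z : E, (∀ j ∈ s, ⟪a j, z⟫ ≤ 0) → ⟪h, z⟫ ≤ 0) : h ∈ coneSet a s := by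
  by_contra hmem
  let K : ConvexCone ℝ E :=
    { carrier := coneSet a s
      smul_mem' := by
        rintro c hc x ⟨lam, h0, rfl⟩
        exact ⟨fun j => c * lam j, fun j hj => mul_nonneg hc.le (h0 j hj), by
          rw [Finset.smul_sum]; exact Finset.sum_congr rfl fun j _ => by dsimp only; rw [smul_smul]⟩
      add_mem' := by
        rintro x ⟨lam, hl0, rfl⟩ y ⟨mu, hm0, rfl⟩
        exact ⟨fun j => lam j + mu j, fun j hj => add_nonneg (hl0 j hj) (hm0 j hj), by
          rw [← Finset.sum_add_distrib]
          exact Finset.sum_congr rfl fun j _ => by dsimp only; rw [add_smul]⟩ }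
  let C : ProperCone ℝ E :=
    { carrier := coneSet a s
      add_mem' := fun hx hy => K.add_mem' hx hy
      zero_mem' := zero_mem_coneSet a s
      smul_mem' := by
        rintro c x ⟨lam, h0, rfl⟩
        exact ⟨fun j => c * lam j, fun j hj => mul_nonneg c.2 (h0 j hj), by
          change (c:ℝ) • (∑ j ∈ s, lam j • a j : E) = _
          rw [Finset.smul_sum]
          exact Finset.sum_congr rfl fun j _ => by rw [smul_smul]⟩
      isClosed' := coneSet_isClosed a s }
  obtain ⟨y, hy1, hy2⟩ := C.hyperplane_separation' (x₀ := h) (show h ∉ C from hmem)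
  have hz : ∀ j ∈ s, ⟪a j, -y⟫ ≤ 0 := fun j hj => by
    rw [inner_neg_right, neg_nonpos]
    exact hy1 _ (mem_coneSet_self a s hj)
  have := hyp _ hz
  rw [inner_neg_right, neg_nonpos] at this
  linarith

/-- norm of coefficients controlled by norm of the combination, for independent families -/
lemma exists_inv_bound (a : ι → E) (t : Finset ι)
    (h : LinearIndependent ℝ (fun j : t => a j)) :
    ∃ c : ℝ, 0 ≤ c ∧ ∀ lam : (↥t) → ℝ, ‖lam‖ ≤ c * ‖combMap a t lam‖ := by
  have hinj := combMap_inj a t h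
  let e := LinearEquiv.ofInjective (combMap a t) hinj
  let f := LinearMap.toContinuousLinearMap (e.symm.toLinearMap)
  refine ⟨‖f‖, norm_nonneg f, fun lam => ?_⟩
  have h1 : f (e lam) = lam := by
    simp only [f, LinearMap.coe_toContinuousLinearMap', LinearEquiv.coe_coe]
    exact e.symm_apply_apply lam
  have h2 : ‖e lam‖ = ‖combMap a t lam‖ := by
    have hco : ((e lam : ↥(LinearMap.range (combMap a t))) : E) = combMap a t lam := by
      simp [e]
    rw [← hco]
    rfl
  calc ‖lam‖ = ‖f (e lam)‖ := by rw [h1]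
    _ ≤ ‖f‖ * ‖e lam‖ := f.le_opNorm _
    _ = ‖f‖ * ‖combMap a t lam‖ := by rw [h2]
lemma hoffman_general (a : ι → E) :
    ∃ γ : ℝ, 0 < γ ∧ ∀ (b : ι → ℝ) (u : E) (ε : ℝ), 0 ≤ ε →
      ({v : E | ∀ j, ⟪a j, v⟫ ≤ b j}).Nonempty →
      (∀ j, ⟪a j, u⟫ ≤ b j + ε) →
      Metric.infDist u {v : E | ∀ j, ⟪a j, v⟫ ≤ b j} ≤ γ * ε := by
  classical
  -- constants from the bounded-inverse lemma
  have hc : ∀ t : Finset ι, ∃ c : ℝ, 0 ≤ c ∧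
      (LinearIndependent ℝ (fun j : t => a j) → ∀ lam : (↥t) → ℝ, ‖lam‖ ≤ c * ‖combMap a t lam‖) := by
    intro t
    by_cases h : LinearIndependent ℝ (fun j : t => a j)
    · obtain ⟨c, hc0, hcb⟩ := exists_inv_bound a t h
      exact ⟨c, hc0, fun _ => hcb⟩
    · exact ⟨0, le_refl 0, fun h' => absurd h' h⟩
  choose c hc0 hcb using hc
  have hsumnn : (0:ℝ) ≤ ∑ t : Finset ι, ((t.card : ℝ) * c t) :=
    Finset.sum_nonneg fun s _ => mul_nonneg (Nat.cast_nonneg _) (hc0 s)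
  refine ⟨1 + ∑ t : Finset ι, (t.card * c t),
    add_pos_of_pos_of_nonneg one_pos hsumnn, ?_⟩
  set γ : ℝ := 1 + ∑ t : Finset ι, (t.card * c t) with hγ
  have hγpos : 0 < γ := add_pos_of_pos_of_nonneg one_pos hsumnn
  intro b u ε hε hne hu
  set S : Set E := {v : E | ∀ j, ⟪a j, v⟫ ≤ b j} with hS
  have hSclosed : IsClosed S := by
    have : S = ⋂ j, {v : E | ⟪a j, v⟫ ≤ b j} := by ext v; simp [hS, Set.mem_iInter]
    rw [this]
    exact isClosed_iInter fun j =>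
      isClosed_le (Continuous.inner continuous_const continuous_id) continuous_const
  have hSconvex : Convex ℝ S := by
    intro x hx y hy σ τ hσ hτ hστ
    intro j
    have : ⟪a j, σ • x + τ • y⟫ = σ * ⟪a j, x⟫ + τ * ⟪a j, y⟫ := by
      rw [inner_add_right, real_inner_smul_right, real_inner_smul_right]
    rw [this]
    calc σ * ⟪a j, x⟫ + τ * ⟪a j, y⟫ ≤ σ * b j + τ * b j := by
          gcongr <;> [exact hx j; exact hy j]
      _ = b j := by rw [← add_mul, hστ, one_mul]
  obtain ⟨v, hvS, hvmin⟩ :=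
    exists_norm_eq_iInf_of_complete_convex hne hSclosed.isComplete hSconvex u
  have hvar : ∀ w ∈ S, ⟪u - v, w - v⟫ ≤ 0 :=
    (norm_eq_iInf_iff_real_inner_le_zero hSconvex hvS).1 hvmin
  set act : Finset ι := Finset.univ.filter (fun j => ⟪a j, v⟫ = b j) with hact
  -- the residual is in the cone of active constraints
  have hcone : u - v ∈ coneSet a act := by
    apply farkas_cone
    intro z hz
    -- find δ > 0 with v + δ • z ∈ S
    set T : Finset ι := Finset.univ.filter (fun j => ⟪a j, v⟫ < b j) with hT
    set δ : ℝ := if hT' : T.Nonempty then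
        min 1 (T.inf' hT' fun j => (b j - ⟪a j, v⟫) / (‖a j‖ * ‖z‖ + 1)) else 1 with hδ
    have hδpos : 0 < δ := by
      rw [hδ]
      split
      · rename_i hT'
        refine lt_min one_pos ?_
        rw [Finset.lt_inf'_iff]
        intro j hj
        have h1 : ⟪a j, v⟫ < b j := (Finset.mem_filter.1 hj).2
        have h2 : 0 < ‖a j‖ * ‖z‖ + 1 := by positivity
        exact div_pos (by linarith) h2
      · exact one_pos
    have hδle : ∀ j ∈ T, δ ≤ (b j - ⟪a j, v⟫) / (‖a j‖ * ‖z‖ + 1) := by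
      intro j hj
      rw [hδ, dif_pos ⟨j, hj⟩]
      exact (min_le_right _ _).trans (Finset.inf'_le _ hj)
    have hmem : v + δ • z ∈ S := by
      intro j
      have hinner : ⟪a j, v + δ • z⟫ = ⟪a j, v⟫ + δ * ⟪a j, z⟫ := by
        rw [inner_add_right, real_inner_smul_right]
      rw [hinner]
      by_cases hactj : ⟪a j, v⟫ = b j
      · have hjact : j ∈ act := Finset.mem_filter.2 ⟨Finset.mem_univ j, hactj⟩
        have := hz j hjact
        nlinarith
      · have hjT : j ∈ T := Finset.mem_filter.2 ⟨Finset.mem_univ j,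
          lt_of_le_of_ne (hvS j) hactj⟩
        have hq := hδle j hjT
        have hCS : ⟪a j, z⟫ ≤ ‖a j‖ * ‖z‖ := real_inner_le_norm (a j) z
        have hN : (0:ℝ) ≤ ‖a j‖ * ‖z‖ := by positivity
        have hden : (0:ℝ) < ‖a j‖ * ‖z‖ + 1 := by positivity
        have hbj : 0 < b j - ⟪a j, v⟫ := by
          have := (Finset.mem_filter.1 hjT).2; linarith
        set q : ℝ := (b j - ⟪a j, v⟫) / (‖a j‖ * ‖z‖ + 1) with hqdef
        have hq0 : 0 ≤ q := le_of_lt (div_pos hbj hden)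
        have hqmul : q * (‖a j‖ * ‖z‖ + 1) = b j - ⟪a j, v⟫ :=
          div_mul_cancel₀ _ (ne_of_gt hden)
        have e1 : δ * ⟪a j, z⟫ ≤ δ * (‖a j‖ * ‖z‖) :=
          mul_le_mul_of_nonneg_left hCS hδpos.le
        have e2 : δ * (‖a j‖ * ‖z‖) ≤ q * (‖a j‖ * ‖z‖) :=
          mul_le_mul_of_nonneg_right hq hN
        nlinarith
    have := hvar _ hmem
    rw [add_sub_cancel_left, real_inner_smul_right] at this
    by_contra h'
    push_neg at h'
    nlinarith
  obtain ⟨lam, hlam0, hlamsum⟩ := hcone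
  obtain ⟨t, hts, hli, mu, hmu0, hmusum⟩ := cone_caratheodory a act lam hlam0
  have hsum : ∑ j ∈ t, mu j • a j = u - v := by rw [hmusum, ← hlamsum]
  -- the estimate
  set lamt : (↥t) → ℝ := fun j => mu j with hlamt
  have hcomb : combMap a t lamt = u - v := by
    rw [combMap]
    simp only [LinearMap.coe_mk, AddHom.coe_mk]
    rw [← hsum]
    exact Finset.sum_coe_sort t (fun j => mu j • a j)
  have hnsq : ‖u - v‖ ^ 2 = ∑ j ∈ t, mu j * ⟪a j, u - v⟫ := by
    rw [← real_inner_self_eq_norm_sq, ← hsum, sum_inner]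
    exact Finset.sum_congr rfl fun j _ => real_inner_smul_left _ _ _
  have hterm : ∀ j ∈ t, mu j * ⟪a j, u - v⟫ ≤ mu j * ε := by
    intro j hj
    have hjact : ⟪a j, v⟫ = b j := (Finset.mem_filter.1 (hts hj)).2
    have : ⟪a j, u - v⟫ = ⟪a j, u⟫ - b j := by rw [inner_sub_right, hjact]
    rw [this]
    exact mul_le_mul_of_nonneg_left (by linarith [hu j]) (hmu0 j hj)
  have hmusumle : ∑ j ∈ t, mu j ≤ t.card * ‖lamt‖ := by
    rw [← Finset.sum_coe_sort t mu]
    calc ∑ j : ↥t, mu (j : ι) ≤ ∑ _j : ↥t, ‖lamt‖ := by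
          refine Finset.sum_le_sum fun j _ => ?_
          calc mu (j : ι) = lamt j := rfl
            _ ≤ |lamt j| := le_abs_self _
            _ ≤ ‖lamt‖ := by
                have := norm_le_pi_norm lamt j
                simpa using this
      _ = t.card * ‖lamt‖ := by
          rw [Finset.sum_const, Finset.card_univ, Fintype.card_coe, nsmul_eq_mul]
  have hlamtb : ‖lamt‖ ≤ c t * ‖u - v‖ := by
    have := hcb t hli lamt
    rwa [hcomb] at this
  have hKγ : (t.card : ℝ) * c t ≤ γ := by
    rw [hγ]
    have h1 : (t.card : ℝ) * c t ≤ ∑ s : Finset ι, (s.card * c s) :=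
      Finset.single_le_sum (f := fun s : Finset ι => (s.card : ℝ) * c s)
        (fun s _ => mul_nonneg (Nat.cast_nonneg _) (hc0 s)) (Finset.mem_univ t)
    linarith
  have hK0 : (0:ℝ) ≤ (t.card : ℝ) * c t := mul_nonneg (Nat.cast_nonneg _) (hc0 t)
  have hfinal : ‖u - v‖ ^ 2 ≤ ((t.card : ℝ) * c t) * ‖u - v‖ * ε := by
    calc ‖u - v‖ ^ 2 = ∑ j ∈ t, mu j * ⟪a j, u - v⟫ := hnsq
      _ ≤ ∑ j ∈ t, mu j * ε := Finset.sum_le_sum hterm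
      _ = (∑ j ∈ t, mu j) * ε := by rw [Finset.sum_mul]
      _ ≤ (t.card * ‖lamt‖) * ε := by
          apply mul_le_mul_of_nonneg_right hmusumle hε
      _ ≤ (t.card * (c t * ‖u - v‖)) * ε := by
          have : (t.card : ℝ) * ‖lamt‖ ≤ t.card * (c t * ‖u - v‖) :=
            mul_le_mul_of_nonneg_left hlamtb (Nat.cast_nonneg _)
          exact mul_le_mul_of_nonneg_right this hε
      _ = ((t.card : ℝ) * c t) * ‖u - v‖ * ε := by ring
  have hdistle : Metric.infDist u S ≤ ‖u - v‖ := by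
    rw [← dist_eq_norm]
    exact Metric.infDist_le_dist_of_mem hvS
  have hnv : ‖u - v‖ ≤ γ * ε := by
    rcases eq_or_lt_of_le (norm_nonneg (u - v)) with h0 | h0
    · rw [← h0]; exact mul_nonneg hγpos.le hε
    · have h1 : ‖u - v‖ ≤ ((t.card : ℝ) * c t) * ε := by
        have h2 : ‖u - v‖ * ‖u - v‖ ≤ (((t.card : ℝ) * c t) * ε) * ‖u - v‖ := by
          calc ‖u - v‖ * ‖u - v‖ = ‖u - v‖ ^ 2 := (pow_two _).symm
            _ ≤ ((t.card : ℝ) * c t) * ‖u - v‖ * ε := hfinal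
            _ = (((t.card : ℝ) * c t) * ε) * ‖u - v‖ := by ring
        exact le_of_mul_le_mul_right h2 h0
      calc ‖u - v‖ ≤ ((t.card : ℝ) * c t) * ε := h1
        _ ≤ γ * ε := mul_le_mul_of_nonneg_right hKγ hε
  linarith
set_option maxHeartbeats 1000000 in
lemma euclidean_abs_coord_le_norm {m : ℕ} (x : EuclideanSpace ℝ (Fin m)) (j : Fin m) :
    |x j| ≤ ‖x‖ := by
  rw [EuclideanSpace.norm_eq]
  have h1 : |x j| ^ 2 ≤ ∑ i, ‖x i‖ ^ 2 := by
    have := Finset.single_le_sum (f := fun i => ‖x i‖ ^ 2)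
      (fun i _ => sq_nonneg _) (Finset.mem_univ j)
    simpa [Real.norm_eq_abs, sq_abs] using this
  calc |x j| = Real.sqrt (|x j| ^ 2) := (Real.sqrt_sq (abs_nonneg _)).symm
    _ ≤ Real.sqrt (∑ i, ‖x i‖ ^ 2) := Real.sqrt_le_sqrt h1

/-- Hoffman-type Lipschitz continuity of the feasible-set mapping
`P(r) = {u : u ≥ 0, D u ≤ r}` of a linear program with fixed recourse matrix `D`:
there is `γ > 0` (depending only on `D`) such that whenever `P r` and `P r'` are
nonempty and `u ∈ P r`, we have `dist(u, P r') ≤ γ ‖r - r'‖`. -/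
theorem hoffman_feasible_set_lipschitz (m n : ℕ) (D : Matrix (Fin m) (Fin n) ℝ) :
    ∃ γ : ℝ, 0 < γ ∧
      ∀ r r' : EuclideanSpace ℝ (Fin m),
        ({u : EuclideanSpace ℝ (Fin n) | (∀ i, 0 ≤ u i) ∧ ∀ j, D.mulVec u j ≤ r j}).Nonempty →
        ({u : EuclideanSpace ℝ (Fin n) | (∀ i, 0 ≤ u i) ∧ ∀ j, D.mulVec u j ≤ r' j}).Nonempty →
        ∀ u ∈ {u : EuclideanSpace ℝ (Fin n) | (∀ i, 0 ≤ u i) ∧ ∀ j, D.mulVec u j ≤ r j},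
          Metric.infDist u
            {u : EuclideanSpace ℝ (Fin n) | (∀ i, 0 ≤ u i) ∧ ∀ j, D.mulVec u j ≤ r' j}
            ≤ γ * ‖r - r'‖ := by
  classical
  set a : (Fin m ⊕ Fin n) → EuclideanSpace ℝ (Fin n) := fun x =>
    Sum.elim (fun j => (WithLp.equiv 2 (Fin n → ℝ)).symm (fun i => D j i))
      (fun i => -(EuclideanSpace.single i (1:ℝ))) x with ha
  have hinl : ∀ (j : Fin m) (u : EuclideanSpace ℝ (Fin n)),
      @inner ℝ _ _ (a (Sum.inl j)) u = D.mulVec u j := by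
    intro j u
    simp only [ha, Sum.elim_inl, PiLp.inner_apply, RCLike.inner_apply, conj_trivial]
    simp [Matrix.mulVec, dotProduct, mul_comm]
  have hinr : ∀ (i : Fin n) (u : EuclideanSpace ℝ (Fin n)),
      @inner ℝ _ _ (a (Sum.inr i)) u = -u i := by
    intro i u
    simp only [ha, Sum.elim_inr, inner_neg_left, EuclideanSpace.inner_single_left,
      conj_trivial, one_mul]
  obtain ⟨γ, hγ0, hγ⟩ := hoffman_general a
  refine ⟨γ, hγ0, ?_⟩
  intro r r' _hne hne' u hu
  have hseteq : ∀ s : EuclideanSpace ℝ (Fin m),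
      {u : EuclideanSpace ℝ (Fin n) | (∀ i, 0 ≤ u i) ∧ ∀ j, D.mulVec u j ≤ s j}
        = {v : EuclideanSpace ℝ (Fin n) |
            ∀ x : Fin m ⊕ Fin n, @inner ℝ _ _ (a x) v ≤ Sum.elim (fun j => s j) (fun _ => 0) x} := by
    intro s
    ext v
    constructor
    · rintro ⟨h1, h2⟩ (j | i)
      · rw [hinl]; exact h2 j
      · rw [hinr]; simpa using h1 i
    · intro h
      refine ⟨fun i => ?_, fun j => ?_⟩
      · have := h (Sum.inr i); rw [hinr] at this; simpa using this
      · have := h (Sum.inl j); rw [hinl] at this; simpa using this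
  rw [hseteq r']
  apply hγ _ u ‖r - r'‖ (norm_nonneg _) (by rw [← hseteq r']; exact hne')
  rintro (j | i)
  · rw [hinl]
    have h1 : D.mulVec u j ≤ r j := hu.2 j
    have h2 : r j - r' j ≤ ‖r - r'‖ := by
      have := euclidean_abs_coord_le_norm (r - r') j
      have h3 : (r - r') j = r j - r' j := rfl
      rw [h3] at this
      exact (le_abs_self _).trans this
    simp only [Sum.elim_inl]
    linarith
  · rw [hinr]
    have := hu.1 i
    simp only [Sum.elim_inr]
    have h4 : (0:ℝ) ≤ ‖r - r'‖ := norm_nonneg _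
    linarith
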